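/- arXiv:1211.6303 — 5 statements merged into one kernel-verified Lean document; each statement's English description precedes it below -/
import Mathlib

section
/- Let R be a discrete valuation ring with field of fractions K and residue field k. Let A be an R-algebra that is free of finite rank as an R-module, and let X, Y be A-modules that are free of finite rank over R. If M is a K⊗A-submodule of K⊗Y such that Hom_{K⊗A}(K⊗X, (K⊗Y)/M) ≠ 0, then there exists a k⊗A-submodule N of k⊗Y such that Hom_{k⊗A}(k⊗X, (k⊗Y)/N) ≠ 0. -/
open TensorProduct

set_option maxHeartbeats 1000000 in
/-- Let `R` be a DVR with fraction field `K` and residue field `k`.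
Let `A` be an `R`-algebra, free of finite rank over `R`, and let `X`, `Y` be
`A`-modules that are free of finite rank over `R`.  A `K ⊗ A`-module is viewed as a
`K`-module together with a commuting action of `A` (given on base changes by
`LinearMap.baseChange` of the `A`-scalar-multiplication maps).  If `M` is a
`K ⊗ A`-submodule of `K ⊗ Y` (i.e. a `K`-submodule stable under the `A`-action) and
there is a nonzero `K ⊗ A`-homomorphism `K ⊗ X → (K ⊗ Y)/M`, then there is an
`A`-stable `k`-submodule `N` of `k ⊗ Y` and a nonzero `k ⊗ A`-homomorphism
`k ⊗ X → (k ⊗ Y)/N`. -/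
theorem stmt0
    (R : Type) [CommRing R] [IsDomain R] [IsDiscreteValuationRing R]
    (K : Type) [Field K] [Algebra R K] [IsFractionRing R K]
    (A : Type) [Ring A] [Algebra R A] [Module.Free R A] [Module.Finite R A]
    (X Y : Type) [AddCommGroup X] [AddCommGroup Y]
    [Module R X] [Module R Y] [Module A X] [Module A Y]
    [IsScalarTower R A X] [IsScalarTower R A Y]
    [SMulCommClass A R X] [SMulCommClass A R Y]
    [Module.Free R X] [Module.Finite R X] [Module.Free R Y] [Module.Finite R Y]
    -- the A-actions on the base changes over K
    (actKX : A → (K ⊗[R] X) →ₗ[K] (K ⊗[R] X))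
    (actKY : A → (K ⊗[R] Y) →ₗ[K] (K ⊗[R] Y))
    (hactKX : ∀ a : A, actKX a = LinearMap.baseChange K ((Algebra.lsmul R R X a : X →ₗ[R] X)))
    (hactKY : ∀ a : A, actKY a = LinearMap.baseChange K ((Algebra.lsmul R R Y a : Y →ₗ[R] Y)))
    -- the A-actions on the base changes over the residue field k
    (actkX : A → ((IsLocalRing.ResidueField R) ⊗[R] X) →ₗ[IsLocalRing.ResidueField R]
        ((IsLocalRing.ResidueField R) ⊗[R] X))
    (actkY : A → ((IsLocalRing.ResidueField R) ⊗[R] Y) →ₗ[IsLocalRing.ResidueField R]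
        ((IsLocalRing.ResidueField R) ⊗[R] Y))
    (hactkX : ∀ a : A, actkX a =
      LinearMap.baseChange (IsLocalRing.ResidueField R) ((Algebra.lsmul R R X a : X →ₗ[R] X)))
    (hactkY : ∀ a : A, actkY a =
      LinearMap.baseChange (IsLocalRing.ResidueField R) ((Algebra.lsmul R R Y a : Y →ₗ[R] Y)))
    -- a (K ⊗ A)-submodule M of K ⊗ Y
    (M : Submodule K (K ⊗[R] Y))
    (hM : ∀ a : A, ∀ m ∈ M, actKY a m ∈ M)
    -- a nonzero (K ⊗ A)-homomorphism K ⊗ X → (K ⊗ Y)/M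
    (f : (K ⊗[R] X) →ₗ[K] ((K ⊗[R] Y) ⧸ M))
    (hf : f ≠ 0)
    (hfequiv : ∀ a : A,
      f.comp (actKX a) = (Submodule.mapQ M M (actKY a) (fun m hm => hM a m hm)).comp f) :
    ∃ N : Submodule (IsLocalRing.ResidueField R) ((IsLocalRing.ResidueField R) ⊗[R] Y),
      (∀ a : A, ∀ m ∈ N, actkY a m ∈ N) ∧
      ∃ hN : ∀ a : A, ∀ m ∈ N, actkY a m ∈ N,
      ∃ g : ((IsLocalRing.ResidueField R) ⊗[R] X) →ₗ[IsLocalRing.ResidueField R]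
          (((IsLocalRing.ResidueField R) ⊗[R] Y) ⧸ N),
        g ≠ 0 ∧
        ∀ a : A, g.comp (actkX a) =
          (Submodule.mapQ N N (actkY a) (fun m hm => hN a m hm)).comp g := by
  classical
  obtain ⟨ϖ, hϖ⟩ := IsDiscreteValuationRing.exists_irreducible R
  have hϖ0 : ϖ ≠ 0 := hϖ.ne_zero
  have hmax : IsLocalRing.maximalIdeal R = Ideal.span {ϖ} :=
    (IsDiscreteValuationRing.irreducible_iff_uniformizer ϖ).mp hϖ
  set Q := (K ⊗[R] Y) ⧸ M with hQdef
  set ι : Y →ₗ[R] K ⊗[R] Y := (TensorProduct.mk R K Y) 1 with hιdef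
  set ιX : X →ₗ[R] K ⊗[R] X := (TensorProduct.mk R K X) 1 with hιXdef
  set θ : Y →ₗ[R] Q := (M.mkQ.restrictScalars R).comp ι with hθdef
  set T : Submodule R Q := LinearMap.range θ with hTdef
  set φ0 : X →ₗ[R] Q := (f.restrictScalars R).comp ιX with hφ0def
  have hθy : ∀ y : Y, θ y = M.mkQ ((1:K) ⊗ₜ[R] y) := fun y => rfl
  have hφ0x : ∀ x : X, φ0 x = f ((1:K) ⊗ₜ[R] x) := fun x => rfl
  -- equivariance of θ
  have hθeq : ∀ (a : A) (y : Y),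
      θ (a • y) = Submodule.mapQ M M (actKY a) (fun m hm => hM a m hm) (θ y) := by
    intro a y
    have h1 : actKY a ((1:K) ⊗ₜ[R] y) = (1:K) ⊗ₜ[R] (a • y) := by
      rw [hactKY]; simp [LinearMap.baseChange_tmul]
    rw [hθy, hθy]
    simp only [Submodule.mkQ_apply, Submodule.mapQ_apply]
    rw [h1]
  -- nonvanishing of φ0
  have hx0 : ∃ x : X, φ0 x ≠ 0 := by
    by_contra h
    push_neg at h
    apply hf
    have hspan : Submodule.span K (Set.range fun x : X => (1:K) ⊗ₜ[R] x) = ⊤ := by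
      rw [eq_top_iff]
      rintro z -
      induction z using TensorProduct.induction_on with
      | zero => exact zero_mem _
      | tmul c x =>
          have hcx : (c ⊗ₜ[R] x : K ⊗[R] X) = c • ((1:K) ⊗ₜ[R] x) := by
            rw [smul_tmul', smul_eq_mul, mul_one]
          rw [hcx]
          exact Submodule.smul_mem _ _ (Submodule.subset_span ⟨x, rfl⟩)
      | add u v hu hv => exact add_mem hu hv
    have hker : Submodule.span K (Set.range fun x : X => (1:K) ⊗ₜ[R] x) ≤ LinearMap.ker f :=
      Submodule.span_le.mpr (by rintro _ ⟨x, rfl⟩; exact h x)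
    apply LinearMap.ext
    intro z
    have hz : z ∈ LinearMap.ker f := hker (by rw [hspan]; exact Submodule.mem_top)
    simpa using hz
  obtain ⟨x0, hx0⟩ := hx0
  -- clearing denominators: every element of Q has a nonzero multiple in T
  have hclear : ∀ z : Q, ∃ c : R, c ≠ 0 ∧ c • z ∈ T := by
    let S : Submodule K Q :=
      { carrier := {z | ∃ c : R, c ≠ 0 ∧ c • z ∈ T}
        add_mem' := by
          rintro z1 z2 ⟨c1, hc1, hc1T⟩ ⟨c2, hc2, hc2T⟩
          refine ⟨c1 * c2, mul_ne_zero hc1 hc2, ?_⟩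
          have h1 : (c1 * c2) • (z1 + z2) = c2 • (c1 • z1) + c1 • (c2 • z2) := by
            rw [smul_add, mul_smul, mul_smul, smul_comm c1 c2 z1]
          rw [h1]
          exact add_mem (T.smul_mem c2 hc1T) (T.smul_mem c1 hc2T)
        zero_mem' := ⟨1, one_ne_zero, by simpa using T.zero_mem⟩
        smul_mem' := by
          rintro κ z ⟨c, hc, hcT⟩
          obtain ⟨⟨r, s⟩, hrs⟩ := IsLocalization.mk'_surjective (nonZeroDivisors R) κ
          refine ⟨c * (s : R), mul_ne_zero hc (nonZeroDivisors.ne_zero s.2), ?_⟩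
          have h1 : (c * (s : R)) • (κ • z) = r • (c • z) := by
            rw [mul_smul, ← algebraMap_smul K (s : R) (κ • z), ← mul_smul, mul_comm, ← hrs,
              IsLocalization.mk'_spec, algebraMap_smul, smul_comm]
          rw [h1]
          exact T.smul_mem r hcT }
    have hTS : (T : Set Q) ⊆ (S : Set Q) := by
      intro t ht
      exact ⟨1, one_ne_zero, by simpa using ht⟩
    have hQspan : ∀ z : Q, z ∈ Submodule.span K ((T : Set Q)) := by
      intro z
      obtain ⟨w, rfl⟩ := Submodule.mkQ_surjective M z
      induction w using TensorProduct.induction_on with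
      | zero => simpa using Submodule.zero_mem _
      | tmul c y =>
          have h1 : M.mkQ (c ⊗ₜ[R] y) = c • θ y := by
            rw [hθy, ← map_smul]
            congr 1
            rw [smul_tmul', smul_eq_mul, mul_one]
          rw [h1]
          exact Submodule.smul_mem _ _ (Submodule.subset_span ⟨y, rfl⟩)
      | add u v hu hv => rw [map_add]; exact add_mem hu hv
    intro z
    exact Submodule.span_le.mpr hTS (hQspan z)
  -- a common denominator for φ0 on a finite generating set of X
  obtain ⟨nX, sX, hsX⟩ := Module.Finite.exists_fin (R := R) (M := X)
  choose cd hcd0 hcdT using fun i : Fin nX => hclear (φ0 (sX i))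
  set c : R := ∏ i : Fin nX, cd i with hcdef
  have hc0 : c ≠ 0 := Finset.prod_ne_zero_iff.mpr fun i _ => hcd0 i
  set φ1 : X →ₗ[R] Q := c • φ0 with hφ1def
  have hφ1x : ∀ x : X, φ1 x = c • φ0 x := fun x => rfl
  have hφ1T : ∀ x : X, φ1 x ∈ T := by
    have hsub : Submodule.span R (Set.range sX) ≤ Submodule.comap φ1 T := by
      rw [Submodule.span_le]
      rintro _ ⟨i, rfl⟩
      have h1 : c • φ0 (sX i) = (∏ j ∈ Finset.univ.erase i, cd j) • (cd i • φ0 (sX i)) := by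
        rw [← mul_smul, Finset.prod_erase_mul _ _ (Finset.mem_univ i)]
      have h2 : φ1 (sX i) ∈ T := by
        rw [hφ1x, h1]
        exact T.smul_mem _ (hcdT i)
      exact h2
    intro x
    exact hsub (hsX ▸ Submodule.mem_top)
  have hφ1x0 : φ1 x0 ≠ 0 := by
    rw [hφ1x, ← algebraMap_smul K c (φ0 x0)]
    have hcK : algebraMap R K c ≠ 0 := fun hh =>
      hc0 (IsFractionRing.injective R K (by rw [hh, map_zero]))
    exact smul_ne_zero hcK hx0
  -- membership in ϖ^n • T
  have hmemn : ∀ (n : ℕ) (z : Q),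
      z ∈ (IsLocalRing.maximalIdeal R) ^ n • T ↔ ∃ t ∈ T, (ϖ ^ n : R) • t = z := by
    intro n z
    rw [hmax, Ideal.span_singleton_pow, Submodule.ideal_span_singleton_smul]
    constructor
    · intro hz
      exact Set.mem_smul_set.mp hz
    · intro hz
      exact Set.mem_smul_set.mpr hz
  -- by the Krull intersection theorem, the powers of 𝔪 do not all contain range φ1
  have hTfin : Module.Finite R ↥T := Module.Finite.range θ
  have hn_ex : ∃ m : ℕ, ¬ (∀ x : X, φ1 x ∈ (IsLocalRing.maximalIdeal R) ^ m • T) := by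
    by_contra h
    push_neg at h
    have hKrull : (⨅ n : ℕ, (IsLocalRing.maximalIdeal R) ^ n • (⊤ : Submodule R ↥T)) = ⊥ :=
      Ideal.iInf_pow_smul_eq_bot_of_isLocalRing (I := IsLocalRing.maximalIdeal R) (M := ↥T)
        (Ideal.IsMaximal.ne_top (IsLocalRing.maximalIdeal.isMaximal R))
    have hmem : (⟨φ1 x0, hφ1T x0⟩ : ↥T) ∈
        (⨅ n : ℕ, (IsLocalRing.maximalIdeal R) ^ n • (⊤ : Submodule R ↥T)) := by
      rw [Submodule.mem_iInf]
      intro n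
      have h1 : φ1 x0 ∈ (IsLocalRing.maximalIdeal R) ^ n • T := h n x0
      have h2 : (IsLocalRing.maximalIdeal R) ^ n • T =
          Submodule.map T.subtype ((IsLocalRing.maximalIdeal R) ^ n • (⊤ : Submodule R ↥T)) := by
        rw [Submodule.map_smul'', Submodule.map_subtype_top]
      rw [h2] at h1
      obtain ⟨t, ht, hteq⟩ := h1
      have : t = (⟨φ1 x0, hφ1T x0⟩ : ↥T) := Subtype.ext hteq
      rwa [this] at ht
    rw [hKrull] at hmem
    exact hφ1x0 (by simpa using hmem)
  -- the critical exponent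
  set m0 : ℕ := Nat.find hn_ex with hm0def
  have hm0 : ¬ (∀ x : X, φ1 x ∈ (IsLocalRing.maximalIdeal R) ^ m0 • T) := Nat.find_spec hn_ex
  have hm0pos : 0 < m0 := by
    rcases Nat.eq_zero_or_pos m0 with h0 | h0
    · exfalso
      apply hm0
      rw [h0]
      intro x
      simpa using hφ1T x
    · exact h0
  set n : ℕ := m0 - 1 with hndef
  have hn1 : ∀ x : X, φ1 x ∈ (IsLocalRing.maximalIdeal R) ^ n • T := by
    by_contra h
    exact Nat.find_min hn_ex (Nat.sub_lt hm0pos one_pos) h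
  have hn2 : ¬ (∀ x : X, φ1 x ∈ (IsLocalRing.maximalIdeal R) ^ (n + 1) • T) := by
    rwa [hndef, Nat.sub_add_cancel hm0pos]
  -- the rescaled map ψ
  set aϖ : K := algebraMap R K ϖ with haϖdef
  have haϖ0 : aϖ ≠ 0 := fun hh =>
    hϖ0 (IsFractionRing.injective R K (by rw [haϖdef] at hh; rw [hh, map_zero]))
  set lam : K := (aϖ⁻¹) ^ n with hlamdef
  have hlam : lam * aϖ ^ n = 1 := by
    rw [hlamdef, ← mul_pow, inv_mul_cancel₀ haϖ0, one_pow]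
  set scale : Q →ₗ[K] Q := lam • LinearMap.id with hscaledef
  set ψ : X →ₗ[R] Q := (scale.restrictScalars R).comp φ1 with hψdef
  have hψx : ∀ x : X, ψ x = lam • φ1 x := fun x => rfl
  have hψT : ∀ x : X, ψ x ∈ T := by
    intro x
    obtain ⟨t, htT, hteq⟩ := (hmemn n (φ1 x)).mp (hn1 x)
    have h1 : ψ x = t := by
      rw [hψx, ← hteq, ← algebraMap_smul K (ϖ ^ n) t, map_pow, ← haϖdef, ← mul_smul, hlam,
        one_smul]
    rw [h1]; exact htT
  have hψx1 : ∃ x : X, ψ x ∉ (IsLocalRing.maximalIdeal R) ^ 1 • T := by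
    by_contra h
    push_neg at h
    apply hn2
    intro x
    obtain ⟨t, htT, hteq⟩ := (hmemn 1 (ψ x)).mp (h x)
    refine (hmemn (n + 1) (φ1 x)).mpr ⟨t, htT, ?_⟩
    have h1 : φ1 x = (aϖ ^ n) • ψ x := by
      rw [hψx, ← mul_smul, mul_comm, hlam, one_smul]
    rw [h1, ← hteq, pow_one, ← algebraMap_smul K ϖ t, ← haϖdef, ← mul_smul, ← pow_succ,
      haϖdef, ← map_pow, algebraMap_smul]
  obtain ⟨x1, hx1⟩ := hψx1
  -- equivariance of ψ
  have hψeq : ∀ (a : A) (x : X),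
      ψ (a • x) = Submodule.mapQ M M (actKY a) (fun m hm => hM a m hm) (ψ x) := by
    intro a x
    have h0 : φ0 (a • x) = Submodule.mapQ M M (actKY a) (fun m hm => hM a m hm) (φ0 x) := by
      have h1 : actKX a ((1:K) ⊗ₜ[R] x) = (1:K) ⊗ₜ[R] (a • x) := by
        rw [hactKX]; simp [LinearMap.baseChange_tmul]
      have h2 := congrArg (fun (u : (K ⊗[R] X) →ₗ[K] Q) => u ((1:K) ⊗ₜ[R] x)) (hfequiv a)
      simp only [LinearMap.comp_apply] at h2
      rw [hφ0x, hφ0x, ← h1, h2]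
    rw [hψx, hψx, hφ1x, hφ1x, h0, LinearMap.map_smul_of_tower, LinearMap.map_smul_of_tower]
  -- lift ψ through θ using projectivity of X
  have hθsurj : Function.Surjective θ.rangeRestrict := LinearMap.surjective_rangeRestrict θ
  obtain ⟨h, hh⟩ := Module.projective_lifting_property θ.rangeRestrict
    (ψ.codRestrict T hψT) hθsurj
  have hθh : ∀ x : X, θ (h x) = ψ x := by
    intro x
    have := congrArg (fun (u : X →ₗ[R] ↥T) => ((u x : ↥T) : Q)) hh
    simpa using this
  have hheq : ∀ (a : A) (x : X), h (a • x) - a • h x ∈ LinearMap.ker θ := by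
    intro a x
    rw [LinearMap.mem_ker, map_sub, hθh, hψeq, ← hθh, ← hθeq, sub_eq_zero]
  -- the residue-field side
  set ρ : Y →ₗ[R] (IsLocalRing.ResidueField R) ⊗[R] Y :=
    (TensorProduct.mk R (IsLocalRing.ResidueField R) Y) 1 with hρdef
  have hρy : ∀ y : Y, ρ y = (1 : IsLocalRing.ResidueField R) ⊗ₜ[R] y := fun y => rfl
  have hactρ : ∀ (a : A) (y : Y), actkY a (ρ y) = ρ (a • y) := by
    intro a y
    rw [hρy, hρy, hactkY]
    simp [LinearMap.baseChange_tmul]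
  -- kernel of ρ
  have hkerρ : ∀ y : Y, ρ y = 0 → ∃ y' : Y, ϖ • y' = y := by
    intro y hy
    have h1 : (TensorProduct.quotTensorEquivQuotSMul Y (IsLocalRing.maximalIdeal R)) (ρ y) =
        Submodule.Quotient.mk ((1:R) • y) :=
      TensorProduct.quotTensorEquivQuotSMul_mk_tmul (IsLocalRing.maximalIdeal R) 1 y
    rw [one_smul, hy] at h1
    have h1' : Submodule.Quotient.mk (p := (IsLocalRing.maximalIdeal R) • (⊤ : Submodule R Y)) y = 0 :=
      h1.symm.trans (by exact map_zero _)
    have h3 : y ∈ (IsLocalRing.maximalIdeal R) • (⊤ : Submodule R Y) :=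
      (Submodule.Quotient.mk_eq_zero _).mp h1'
    rw [hmax, Submodule.ideal_span_singleton_smul] at h3
    obtain ⟨y', _, hy'⟩ := Set.mem_smul_set.mp h3
    exact ⟨y', hy'⟩
  -- the submodule N
  set N : Submodule (IsLocalRing.ResidueField R) ((IsLocalRing.ResidueField R) ⊗[R] Y) :=
    Submodule.span (IsLocalRing.ResidueField R) (⇑ρ '' (LinearMap.ker θ : Set Y)) with hNdef
  have halgsurj : Function.Surjective (algebraMap R (IsLocalRing.ResidueField R)) :=
    Ideal.Quotient.mk_surjective
  have hNr : N.restrictScalars R = Submodule.map ρ (LinearMap.ker θ) := by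
    rw [hNdef, Submodule.restrictScalars_span R (IsLocalRing.ResidueField R) halgsurj,
      ← Submodule.map_span, Submodule.span_eq]
  have hNmem : ∀ z, z ∈ N ↔ ∃ y ∈ LinearMap.ker θ, ρ y = z := by
    intro z
    constructor
    · intro hz
      have : z ∈ N.restrictScalars R := hz
      rw [hNr] at this
      obtain ⟨y, hy, hyz⟩ := this
      exact ⟨y, hy, hyz⟩
    · rintro ⟨y, hy, rfl⟩
      have : ρ y ∈ N.restrictScalars R := by
        rw [hNr]; exact ⟨y, hy, rfl⟩
      exact this
  -- N is stable under the A-action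
  have hNstable : ∀ a : A, ∀ m ∈ N, actkY a m ∈ N := by
    intro a m hm
    obtain ⟨y, hy, rfl⟩ := (hNmem m).mp hm
    rw [hactρ]
    refine (hNmem _).mpr ⟨a • y, ?_, rfl⟩
    rw [LinearMap.mem_ker, hθeq, LinearMap.mem_ker.mp hy, map_zero]
  -- the map g
  set ghat : X →ₗ[R] ((IsLocalRing.ResidueField R) ⊗[R] Y) ⧸ N :=
    ((N.mkQ.restrictScalars R).comp ρ).comp h with hghatdef
  have hghatx : ∀ x : X, ghat x = N.mkQ (ρ (h x)) := fun x => rfl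
  set g : ((IsLocalRing.ResidueField R) ⊗[R] X) →ₗ[IsLocalRing.ResidueField R]
      (((IsLocalRing.ResidueField R) ⊗[R] Y) ⧸ N) :=
    ghat.liftBaseChange (IsLocalRing.ResidueField R) with hgdef
  have hgtmul : ∀ (cz : IsLocalRing.ResidueField R) (x : X),
      g (cz ⊗ₜ[R] x) = cz • ghat x := by
    intro cz x
    rw [hgdef, LinearMap.liftBaseChange_tmul]
  -- g is nonzero
  have hg0 : g ≠ 0 := by
    intro hg
    have h1 : ghat x1 = 0 := by
      have := congrArg (fun (u : ((IsLocalRing.ResidueField R) ⊗[R] X) →ₗ[IsLocalRing.ResidueField R] _) => u ((1 : IsLocalRing.ResidueField R) ⊗ₜ[R] x1)) hg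
      simpa [hgtmul] using this
    rw [hghatx] at h1
    have h2 : ρ (h x1) ∈ N := (Submodule.Quotient.mk_eq_zero _).mp h1
    obtain ⟨y0, hy0, hy0eq⟩ := (hNmem _).mp h2
    have h3 : ρ (h x1 - y0) = 0 := by rw [map_sub, hy0eq, sub_self]
    obtain ⟨y', hy'⟩ := hkerρ _ h3
    apply hx1
    refine (hmemn 1 (ψ x1)).mpr ⟨θ y', ⟨y', rfl⟩, ?_⟩
    rw [pow_one, ← map_smul, hy', map_sub, LinearMap.mem_ker.mp hy0, sub_zero, hθh]
  -- equivariance of g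
  have hgeq : ∀ a : A, g.comp (actkX a) =
      (Submodule.mapQ N N (actkY a) (fun m hm => hNstable a m hm)).comp g := by
    intro a
    apply LinearMap.ext
    intro z
    induction z using TensorProduct.induction_on with
    | zero => simp
    | tmul cz x =>
        have h1 : actkX a (cz ⊗ₜ[R] x) = cz ⊗ₜ[R] (a • x) := by
          rw [hactkX]; simp [LinearMap.baseChange_tmul]
        have hkey : ghat (a • x) = Submodule.mapQ N N (actkY a) (fun m hm => hNstable a m hm)
            (ghat x) := by
          rw [hghatx, hghatx, Submodule.mkQ_apply, Submodule.mkQ_apply, Submodule.mapQ_apply,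
            hactρ]
          rw [← sub_eq_zero, ← Submodule.Quotient.mk_sub, Submodule.Quotient.mk_eq_zero,
            ← map_sub]
          exact (hNmem _).mpr ⟨h (a • x) - a • h x, hheq a x, rfl⟩
        simp only [LinearMap.comp_apply, h1, hgtmul]
        rw [hkey, LinearMap.map_smul]
    | add u v hu hv => simp only [LinearMap.comp_apply, map_add] at hu hv ⊢; rw [hu, hv]
  exact ⟨N, hNstable, hNstable, g, hg0, hgeq⟩
end

section
/- Let p > 2, and let λ, μ be partitions represented with b beads on an abacus with p runners. If μ = d^r_{(i,j)}(λ), then μ lies in the W·_{δ'}-orbit of λ for δ' = rp − 2b + 2, where W is the infinite Weyl group of type D acting on ⊕_i ℝε_i by the δ'-shifted action w ·_{δ'} x = w(x + ρ(δ')) − ρ(δ'), with ρ(δ') = (−δ'/2, −δ'/2 − 1, −δ'/2 − 2, …). Explicitly, μ = w s_{ε_i + ε_j} ·_{δ'} λ for some w ∈ W that is a product of reflections s_{ε_a − ε_b}. -/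
/-- The basis vector `ε_i` of `⊕ ℝε_i` (modelled inside `ℕ → ℝ`, 1-indexed). -/
noncomputable def epsv (i : ℕ) : ℕ → ℝ := Pi.single i 1

/-- The type `D` reflection `s_{ε_i+ε_j} : x ↦ x − (x,ε_i+ε_j)(ε_i+ε_j)`. -/
noncomputable def sPlus (i j : ℕ) (x : ℕ → ℝ) : ℕ → ℝ := x - (x i + x j) • (epsv i + epsv j)

/-- The type `A` reflection `s_{ε_i−ε_j} : x ↦ x − (x,ε_i−ε_j)(ε_i−ε_j)`. -/
noncomputable def sMinus (i j : ℕ) (x : ℕ → ℝ) : ℕ → ℝ := x - (x i - x j) • (epsv i - epsv j)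

/-- `ρ(δ) = (−δ/2, −δ/2 − 1, −δ/2 − 2, …)`, 1-indexed: `ρ(δ)_a = −δ/2 − (a−1)`. -/
noncomputable def rhov (δ : ℝ) : ℕ → ℝ := fun a => -δ / 2 - ((a : ℝ) - 1)

lemma epsv_apply (i a : ℕ) : epsv i a = if a = i then 1 else 0 := by
  simp [epsv, Pi.single_apply]

lemma sMinus_self (i : ℕ) (x : ℕ → ℝ) : sMinus i i x = x := by
  simp [sMinus]

lemma sMinus_apply_left (i j : ℕ) (hij : i ≠ j) (x : ℕ → ℝ) : sMinus i j x i = x j := by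
  simp [sMinus, epsv_apply, hij]

lemma sMinus_apply_right (i j : ℕ) (hij : i ≠ j) (x : ℕ → ℝ) : sMinus i j x j = x i := by
  simp [sMinus, epsv_apply, hij.symm]

lemma sMinus_apply_other (i j a : ℕ) (hai : a ≠ i) (haj : a ≠ j) (x : ℕ → ℝ) :
    sMinus i j x a = x a := by
  simp [sMinus, epsv_apply, hai, haj]

lemma sMinus_comm (i j : ℕ) (x : ℕ → ℝ) : sMinus i j x = sMinus j i x := by
  unfold sMinus
  rw [show x j - x i = -(x i - x j) by ring, show epsv j - epsv i = -(epsv i - epsv j) by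
    abel, neg_smul_neg]

lemma sPlus_apply_left (i j : ℕ) (hij : i ≠ j) (x : ℕ → ℝ) : sPlus i j x i = -x j := by
  simp [sPlus, epsv_apply, hij]

lemma sPlus_apply_right (i j : ℕ) (hij : i ≠ j) (x : ℕ → ℝ) : sPlus i j x j = -x i := by
  simp [sPlus, epsv_apply, hij.symm]

lemma sPlus_apply_other (i j a : ℕ) (hai : a ≠ i) (haj : a ≠ j) (x : ℕ → ℝ) :
    sPlus i j x a = x a := by
  simp [sPlus, epsv_apply, hai, haj]

lemma foldr_sMinus_append (L1 L2 : List (ℕ × ℕ)) (y : ℕ → ℝ) :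
    ((L1 ++ L2).foldr (fun q f => sMinus q.1 q.2 ∘ f) id) y =
      (L1.foldr (fun q f => sMinus q.1 q.2 ∘ f) id)
        ((L2.foldr (fun q f => sMinus q.1 q.2 ∘ f) id) y) := by
  induction L1 with
  | nil => simp
  | cons q L1 ih =>
    simp only [List.cons_append, List.foldr_cons, Function.comp_apply]
    exact congrArg _ ih

lemma map_sMinus (y : ℕ → ℝ) (u : Multiset ℕ) (hu : u.Nodup) (a c : ℕ)
    (ha : a ∈ u) (hc : c ∈ u) : u.map (sMinus a c y) = u.map y := by
  by_cases hac : a = c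
  · subst hac; rw [sMinus_self]
  · have h1 : a ::ₘ u.erase a = u := Multiset.cons_erase ha
    have hc1 : c ∈ u.erase a := (Multiset.mem_erase_of_ne (Ne.symm hac)).mpr hc
    have h2 : c ::ₘ (u.erase a).erase c = u.erase a := Multiset.cons_erase hc1
    have hna : a ∉ u.erase a := hu.notMem_erase
    have hnc : c ∉ (u.erase a).erase c := (hu.erase a).notMem_erase
    have hrest : ((u.erase a).erase c).map (sMinus a c y) = ((u.erase a).erase c).map y := by
      apply Multiset.map_congr rfl
      intro t ht
      have hta : t ≠ a := by rintro rfl; exact hna (Multiset.mem_of_mem_erase ht)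
      have htc : t ≠ c := by rintro rfl; exact hnc ht
      exact sMinus_apply_other a c t hta htc y
    calc u.map (sMinus a c y) = (a ::ₘ c ::ₘ (u.erase a).erase c).map (sMinus a c y) := by
          rw [h2, h1]
      _ = y c ::ₘ y a ::ₘ ((u.erase a).erase c).map y := by
          rw [Multiset.map_cons, Multiset.map_cons, hrest,
            sMinus_apply_left a c hac, sMinus_apply_right a c hac]
      _ = (a ::ₘ c ::ₘ (u.erase a).erase c).map y := by
          rw [Multiset.map_cons, Multiset.map_cons, Multiset.cons_swap]
      _ = u.map y := by rw [h2, h1]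

lemma key (n : ℕ) : ∀ (s : Finset ℕ) (y z : ℕ → ℝ), s.card = n →
    (∀ t ∈ s, 1 ≤ t) → s.val.map y = s.val.map z → (∀ t, t ∉ s → y t = z t) →
    ∃ L : List (ℕ × ℕ), (∀ q ∈ L, 1 ≤ q.1 ∧ q.1 < q.2) ∧
      (L.foldr (fun q f => sMinus q.1 q.2 ∘ f) id) y = z := by
  induction n with
  | zero =>
    intro s y z hcard _ _ hout
    refine ⟨[], by simp, funext fun t => ?_⟩
    exact hout t (by simp [Finset.card_eq_zero.mp hcard])
  | succ n IH =>
    intro s y z hcard hge hmap hout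
    obtain ⟨a, ha⟩ := Finset.card_pos.mp (by omega : 0 < s.card)
    have hza : z a ∈ s.val.map y := by
      rw [hmap]; exact Multiset.mem_map_of_mem _ ha
    obtain ⟨c, hc, hyc⟩ := Multiset.mem_map.mp hza
    have hc' : c ∈ s := hc
    set y₂ := sMinus a c y with hy2def
    have hy2a : y₂ a = z a := by
      by_cases hac : a = c
      · subst hac; rw [hy2def, sMinus_self]; exact hyc
      · rw [hy2def, sMinus_apply_left a c hac]; exact hyc
    have hy2other : ∀ t, t ≠ a → t ≠ c → y₂ t = y t := fun t hta htc =>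
      sMinus_apply_other a c t hta htc y
    have hmap2 : s.val.map y₂ = s.val.map z := by
      rw [hy2def, map_sMinus y s.val s.nodup a c ha hc]; exact hmap
    -- peel off a
    have hsval : a ::ₘ s.val.erase a = s.val := Multiset.cons_erase (ha : a ∈ s.val)
    have hmap3 : (s.erase a).val.map y₂ = (s.erase a).val.map z := by
      have := hmap2
      rw [← hsval, Multiset.map_cons, Multiset.map_cons, hy2a,
        Multiset.cons_inj_right] at this
      rwa [Finset.erase_val]
    have hout3 : ∀ t, t ∉ s.erase a → y₂ t = z t := by
      intro t ht
      by_cases hta : t = a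
      · subst hta; exact hy2a
      · have hts : t ∉ s := fun hts => ht (Finset.mem_erase.mpr ⟨hta, hts⟩)
        have htc : t ≠ c := fun h => hts (h ▸ hc')
        rw [hy2other t hta htc]; exact hout t hts
    have hcard3 : (s.erase a).card = n := by
      rw [Finset.card_erase_of_mem ha]; omega
    have hge3 : ∀ t ∈ s.erase a, 1 ≤ t := fun t ht => hge t (Finset.mem_of_mem_erase ht)
    obtain ⟨L, hL, hLy⟩ := IH (s.erase a) y₂ z hcard3 hge3 hmap3 hout3
    by_cases hac : a = c
    · refine ⟨L, hL, ?_⟩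
      have : y₂ = y := by rw [hy2def, hac, sMinus_self]
      rwa [this] at hLy
    · refine ⟨L ++ [(min a c, max a c)], ?_, ?_⟩
      · intro q hq
        rcases List.mem_append.mp hq with h | h
        · exact hL q h
        · simp only [List.mem_singleton] at h
          subst h
          have h1 : 1 ≤ a := hge a ha
          have h2 : 1 ≤ c := hge c hc'
          constructor
          · simp [le_min_iff, h1, h2]
          · simp only
            omega
      · rw [foldr_sMinus_append]
        have hmm : sMinus (min a c) (max a c) y = y₂ := by
          rcases le_or_gt a c with h | h
          · rw [min_eq_left h, max_eq_right h, hy2def]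
          · rw [min_eq_right h.le, max_eq_left h.le, hy2def, sMinus_comm]
        simp only [List.foldr_cons, List.foldr_nil, Function.comp_apply, id_eq, hmm]
        exact hLy

/-- Let `p > 2` and let `λ, μ` be partitions represented with `b` beads
on an abacus with `p` runners (β-sequence `β_λ(a) = λ_a − a + b` for `1 ≤ a ≤ b`).  If
`μ = d^r_{(i,j)}(λ)`, i.e. the β-multiset of `μ` is that of `λ` with the entries
`β_λ(i), β_λ(j)` replaced by `−β_λ(i) + rp, −β_λ(j) + rp`, then `μ ∈ W ·_{δ'} λ` for
`δ' = rp − 2b + 2`: explicitly `μ = w s_{ε_i+ε_j} ·_{δ'} λ`, i.e.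
`μ + ρ(δ') = (w ∘ s_{ε_i+ε_j})(λ + ρ(δ'))`, for some `w ∈ W` which is a product of
reflections `s_{ε_a−ε_b}`. -/
theorem stmt8 (p b : ℕ) (hp : p.Prime) (hp2 : 2 < p) (r : ℤ)
    (lam mu : ℕ → ℕ)
    (hlam : Antitone fun a => lam (a + 1)) (hlam0 : lam 0 = 0)
    (hlamsupp : ∀ a, b < a → lam a = 0)
    (hmu : Antitone fun a => mu (a + 1)) (hmu0 : mu 0 = 0)
    (hmusupp : ∀ a, b < a → mu a = 0)
    (i j : ℕ) (hi : 1 ≤ i) (hij : i < j) (hjb : j ≤ b)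
    (βlam βmu : ℕ → ℤ)
    (hβlam : ∀ a, βlam a = (lam a : ℤ) - a + b)
    (hβmu : ∀ a, βmu a = (mu a : ℤ) - a + b)
    (hmove : (Finset.Icc 1 b).val.map βmu =
      ((((Finset.Icc 1 b).val.map βlam).erase (βlam i)).erase (βlam j)) +
        {-βlam i + r * p, -βlam j + r * p})
    (δ' : ℝ) (hδ' : δ' = (r : ℝ) * p - 2 * b + 2) :
    ∃ L : List (ℕ × ℕ),
      (∀ q ∈ L, 1 ≤ q.1 ∧ q.1 < q.2) ∧
      (L.foldr (fun q f => sMinus q.1 q.2 ∘ f) id)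
          (sPlus i j ((fun a => (lam a : ℝ)) + rhov δ'))
        = (fun a => (mu a : ℝ)) + rhov δ' := by
  set s : Finset ℕ := Finset.Icc 1 b with hs
  have hib : i ∈ s := Finset.mem_Icc.mpr ⟨hi, le_of_lt (lt_of_lt_of_le hij hjb)⟩
  have hjs : j ∈ s := Finset.mem_Icc.mpr ⟨le_trans hi hij.le, hjb⟩
  have hijne : i ≠ j := hij.ne
  set g : ℤ → ℝ := fun t => (t : ℝ) - (r * p) / 2 with hg
  have hzeq : (fun a => (mu a : ℝ)) + rhov δ' = fun a => g (βmu a) := by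
    funext a
    simp only [Pi.add_apply, rhov, hβmu a, hδ', hg]
    push_cast
    ring
  have hyeq : (fun a => (lam a : ℝ)) + rhov δ' = fun a => g (βlam a) := by
    funext a
    simp only [Pi.add_apply, rhov, hβlam a, hδ', hg]
    push_cast
    ring
  set y0 : ℕ → ℝ := sPlus i j (fun a => g (βlam a)) with hy0
  set z : ℕ → ℝ := fun a => g (βmu a) with hz
  -- multiset decomposition of s.val
  have hiv : i ∈ s.val := hib
  have h1 : i ::ₘ s.val.erase i = s.val := Multiset.cons_erase hiv
  have hjv : j ∈ s.val.erase i := (Multiset.mem_erase_of_ne (Ne.symm hijne)).mpr hjs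
  have h2 : j ::ₘ (s.val.erase i).erase j = s.val.erase i := Multiset.cons_erase hjv
  set S : Multiset ℕ := (s.val.erase i).erase j with hS
  have hSdecomp : s.val = i ::ₘ j ::ₘ S := by rw [hS, h2, h1]
  have hmove' : s.val.map βmu = S.map βlam + {-βlam i + r * p, -βlam j + r * p} := by
    have : ((s.val.map βlam).erase (βlam i)).erase (βlam j) = S.map βlam := by
      rw [hSdecomp, Multiset.map_cons, Multiset.map_cons, Multiset.erase_cons_head,
        Multiset.erase_cons_head]
    rw [hmove, this]
  -- elements of S are neither i nor j
  have hSne : ∀ t ∈ S, t ≠ i ∧ t ≠ j := by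
    intro t ht
    have hni : i ∉ s.val.erase i := s.nodup.notMem_erase
    have hnj : j ∉ S := (s.nodup.erase i).notMem_erase
    constructor
    · rintro rfl
      exact hni (Multiset.mem_of_mem_erase ht)
    · rintro rfl
      exact hnj ht
  have hmapS : S.map y0 = S.map (fun a => g (βlam a)) := by
    apply Multiset.map_congr rfl
    intro t ht
    exact sPlus_apply_other i j t (hSne t ht).1 (hSne t ht).2 _
  have hy0i : y0 i = g (-βlam j + r * p) := by
    rw [hy0, sPlus_apply_left i j hijne]
    simp only [hg]
    push_cast
    ring
  have hy0j : y0 j = g (-βlam i + r * p) := by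
    rw [hy0, sPlus_apply_right i j hijne]
    simp only [hg]
    push_cast
    ring
  have hmapeq : s.val.map y0 = s.val.map z := by
    have hzmap : s.val.map z = (s.val.map βmu).map g := by
      rw [Multiset.map_map]
      rfl
    rw [hzmap, hmove', Multiset.map_add, Multiset.map_map]
    rw [hSdecomp, Multiset.map_cons, Multiset.map_cons, hy0i, hy0j, hmapS]
    have : ({-βlam i + r * p, -βlam j + r * p} : Multiset ℤ).map g =
        g (-βlam i + r * p) ::ₘ g (-βlam j + r * p) ::ₘ 0 := by
      simp [Multiset.insert_eq_cons]
    rw [this, add_comm (Multiset.map (g ∘ βlam) S), Multiset.cons_add, Multiset.cons_add,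
      zero_add, Multiset.cons_swap]
    rfl
  have houteq : ∀ t, t ∉ s → y0 t = z t := by
    intro t ht
    have hti : t ≠ i := fun h => ht (h ▸ hib)
    have htj : t ≠ j := fun h => ht (h ▸ hjs)
    have hlm : lam t = mu t := by
      rcases Nat.lt_or_ge t 1 with h | h
      · interval_cases t
        rw [hlam0, hmu0]
      · have htb : b < t := by
          by_contra hbt
          exact ht (Finset.mem_Icc.mpr ⟨h, le_of_not_gt hbt⟩)
        rw [hlamsupp t htb, hmusupp t htb]
    have : βlam t = βmu t := by rw [hβlam, hβmu, hlm]
    rw [hy0, sPlus_apply_other i j t hti htj, hz]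
    simp only [this]
  have hge : ∀ t ∈ s, 1 ≤ t := fun t ht => (Finset.mem_Icc.mp ht).1
  obtain ⟨L, hL, hLy⟩ := key s.card s y0 z rfl hge hmapeq houteq
  refine ⟨L, hL, ?_⟩
  rw [hyeq, hzeq]
  exact hLy
end

section
/- Let λ, μ be partitions with μ ⊆ λ, related by μ = s_{ε_i+ε_j} ·_δ λ for some i < j. Then the skew diagram [λ]\[μ] consists of a horizontal strip in row i whose node contents are the integers from −λ_j + j + δ − 1 up to λ_i − i, together with a horizontal strip in row j whose node contents are the integers from −λ_i + i + δ − 1 up to λ_j − j; pairing the nodes of row i with those of row j in reverse order, the contents of each pair sum to δ − 1. -/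
/-- Let `λ, μ` be partitions (1-indexed) with `μ ⊆ λ`, related by
`μ = s_{ε_i+ε_j} ·_δ λ` for some `i < j`; explicitly `μ = λ − c(ε_i+ε_j)` with
`c = λ_i + λ_j − δ − i − j + 2 ≥ 0`.  Then the skew diagram `[λ]\[μ]` consists of a
horizontal strip in row `i` whose node contents (`content (x,y) = y − x`) are exactly
the integers from `−λ_j + j + δ − 1` up to `λ_i − i`, and a horizontal strip in row `j`
whose contents are exactly the integers from `−λ_i + i + δ − 1` up to `λ_j − j`;
pairing the nodes of row `i` with those of row `j` in reverse order, the contents of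
each pair sum to `δ − 1`. -/
theorem stmt12 (δ : ℤ) (lam mu : ℕ → ℕ)
    (hlam : Antitone fun a => lam (a + 1)) (hmu : Antitone fun a => mu (a + 1))
    (i j : ℕ) (hi : 1 ≤ i) (hij : i < j)
    (c : ℤ) (hc : c = (lam i : ℤ) + lam j - δ - i - j + 2) (hc0 : 0 ≤ c)
    (hmui : (mu i : ℤ) = (lam i : ℤ) - c)
    (hmuj : (mu j : ℤ) = (lam j : ℤ) - c)
    (helse : ∀ a, a ≠ i → a ≠ j → mu a = lam a) :
    ({z : ℤ | ∃ y : ℕ, mu i < y ∧ y ≤ lam i ∧ z = (y : ℤ) - i} =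
        Set.Icc (-(lam j : ℤ) + j + δ - 1) ((lam i : ℤ) - i)) ∧
    ({z : ℤ | ∃ y : ℕ, mu j < y ∧ y ≤ lam j ∧ z = (y : ℤ) - j} =
        Set.Icc (-(lam i : ℤ) + i + δ - 1) ((lam j : ℤ) - j)) ∧
    (∀ t : ℤ, 0 ≤ t → t < c →
      (((mu i : ℤ) + 1 + t) - i) + (((lam j : ℤ) - t) - j) = δ - 1) := by
  refine ⟨?_, ?_, ?_⟩
  · ext z
    simp only [Set.mem_setOf_eq, Set.mem_Icc]
    constructor
    · rintro ⟨y, h1, h2, rfl⟩; omega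
    · rintro ⟨h1, h2⟩
      exact ⟨(z + i).toNat, by omega, by omega, by omega⟩
  · ext z
    simp only [Set.mem_setOf_eq, Set.mem_Icc]
    constructor
    · rintro ⟨y, h1, h2, rfl⟩; omega
    · rintro ⟨h1, h2⟩
      exact ⟨(z + j).toNat, by omega, by omega, by omega⟩
  · intro t h1 h2; omega
end

section
/- Let λ, μ be partitions with μ ⊆ λ related by μ = s_{ε_i+ε_j} ·_δ λ (i < j). Then the transposed partitions μ^T ⊆ λ^T are maximal δ-balanced: they are δ-balanced, and there is no partition ν with μ^T ⊊ ν ⊊ λ^T such that ν and λ^T are δ-balanced. -/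
/-- The skew diagram `[λ]\[μ]` (1-indexed cells `(row, col)`), for `μ ⊆ λ`. -/
def skewCells (lam mu : ℕ → ℕ) : Set (ℕ × ℕ) :=
  {c | 1 ≤ c.1 ∧ mu c.1 < c.2 ∧ c.2 ≤ lam c.1}

/-- `μ ⊆ λ` are `δ`-balanced: (i) the nodes of `[λ]\[μ]` admit a fixed-point-free
pairing in which the contents (`content (x,y) = y − x`) of each pair sum to `1 − δ`;
(ii) if `δ` is even and the nodes of contents `−δ/2` and `(2−δ)/2` in `[λ]\[μ]` form
the staircase configuration of `n` columns (cells `(x+k, y+k)` and `(x+k+1, y+k)`,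
`k < n`), then `n` is even. -/
def IsBalanced (δ : ℤ) (lam mu : ℕ → ℕ) : Prop :=
  (∀ a, mu a ≤ lam a) ∧
  (∃ f : ℕ × ℕ → ℕ × ℕ, ∀ c ∈ skewCells lam mu,
      f c ∈ skewCells lam mu ∧ f (f c) = c ∧ f c ≠ c ∧
      (((c.2 : ℤ) - c.1) + (((f c).2 : ℤ) - (f c).1) = 1 - δ)) ∧
  (Even δ → ∀ x y n : ℕ, 0 < n →
    ({c | c ∈ skewCells lam mu ∧
        (((c.2 : ℤ) - c.1) = -δ / 2 ∨ ((c.2 : ℤ) - c.1) = 1 - δ / 2)} =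
      {c : ℕ × ℕ | ∃ k < n, c = (x + k, y + k) ∨ c = (x + k + 1, y + k)}) → Even n)

/-- The transpose (conjugate) partition: `λ^T_y = #{a ≥ 1 | λ_a ≥ y}` (1-indexed). -/
noncomputable def transposeP (lam : ℕ → ℕ) : ℕ → ℕ :=
  fun y => Nat.card {a : ℕ // 1 ≤ a ∧ y ≤ lam a}

private lemma antFrom1 {f : ℕ → ℕ} (hf : Antitone fun a => f (a + 1)) :
    ∀ {r r' : ℕ}, 1 ≤ r → r ≤ r' → f r' ≤ f r := by
  intro r r' h1 h2
  have h := hf (show r - 1 ≤ r' - 1 by omega)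
  simp only at h
  rwa [Nat.sub_add_cancel h1, Nat.sub_add_cancel (h1.trans h2)] at h

private lemma tp_eq (f : ℕ → ℕ) (y : ℕ) :
    transposeP f y = Set.ncard {a : ℕ | 1 ≤ a ∧ y ≤ f a} :=
  Nat.card_coe_set_eq _

private lemma ncard_Icc' (a b : ℕ) : (Set.Icc a b).ncard = b + 1 - a := by
  rw [← Finset.coe_Icc, Set.ncard_coe_finset, Nat.card_Icc]

private lemma tp_fin {f : ℕ → ℕ} {l : ℕ} (hl : ∀ a, l ≤ a → f a = 0) {y : ℕ} (hy : 1 ≤ y) :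
    {a : ℕ | 1 ≤ a ∧ y ≤ f a}.Finite := by
  apply (Set.finite_Iio l).subset
  rintro a ⟨h1, h2⟩
  simp only [Set.mem_Iio]
  by_contra h
  have := hl a (by omega)
  omega

private lemma tp_le_iff {f : ℕ → ℕ} (hf : Antitone fun a => f (a + 1)) {l : ℕ}
    (hl : ∀ a, l ≤ a → f a = 0) {y a : ℕ} (hy : 1 ≤ y) (ha : 1 ≤ a) :
    a ≤ transposeP f y ↔ y ≤ f a := by
  rw [tp_eq]
  constructor
  · intro h
    by_contra hya
    push_neg at hya
    have hsub : {r : ℕ | 1 ≤ r ∧ y ≤ f r} ⊆ Set.Icc 1 (a - 1) := by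
      rintro r ⟨h1, h2⟩
      refine ⟨h1, ?_⟩
      by_contra hr
      push_neg at hr
      have := antFrom1 hf ha (show a ≤ r by omega)
      omega
    have h2 := Set.ncard_le_ncard hsub (Set.finite_Icc _ _)
    rw [ncard_Icc'] at h2
    omega
  · intro h
    have hsub : Set.Icc 1 a ⊆ {r : ℕ | 1 ≤ r ∧ y ≤ f r} := by
      rintro r ⟨h1, h2⟩
      exact ⟨h1, le_trans h (antFrom1 hf h1 h2)⟩
    have h2 := Set.ncard_le_ncard hsub (tp_fin hl hy)
    rw [ncard_Icc'] at h2
    omega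

private lemma tp_zero (f : ℕ → ℕ) : transposeP f 0 = 0 := by
  rw [tp_eq]
  have h : {a : ℕ | 1 ≤ a ∧ 0 ≤ f a} = Set.Ici 1 := by ext a; simp
  rw [h]
  exact (Set.Ici_infinite 1).ncard

private lemma tp_mono {f g : ℕ → ℕ} (hfg : ∀ a, f a ≤ g a) {l : ℕ}
    (hl : ∀ a, l ≤ a → g a = 0) (y : ℕ) : transposeP f y ≤ transposeP g y := by
  rcases Nat.eq_zero_or_pos y with hy | hy
  · subst hy; rw [tp_zero, tp_zero]
  · rw [tp_eq, tp_eq]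
    exact Set.ncard_le_ncard (fun a ha => ⟨ha.1, ha.2.trans (hfg a)⟩) (tp_fin hl hy)

private lemma memS_iff {mu lam : ℕ → ℕ} (hlam : Antitone fun a => lam (a + 1))
    (hmu : Antitone fun a => mu (a + 1)) {l l' : ℕ}
    (hllam : ∀ a, l ≤ a → lam a = 0) (hlmu : ∀ a, l' ≤ a → mu a = 0) (p : ℕ × ℕ) :
    p ∈ skewCells (transposeP lam) (transposeP mu) ↔
      1 ≤ p.1 ∧ 1 ≤ p.2 ∧ mu p.2 < p.1 ∧ p.1 ≤ lam p.2 := by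
  constructor
  · rintro ⟨h1, h2, h3⟩
    have hb : 1 ≤ p.2 := by omega
    refine ⟨h1, hb, ?_, (tp_le_iff hlam hllam h1 hb).mp h3⟩
    by_contra h
    push_neg at h
    have := (tp_le_iff hmu hlmu h1 hb).mpr h
    omega
  · rintro ⟨h1, h2, h3, h4⟩
    refine ⟨h1, ?_, (tp_le_iff hlam hllam h1 h2).mpr h4⟩
    by_contra h
    push_neg at h
    have := (tp_le_iff hmu hlmu h1 h2).mp h
    omega

private lemma memT_iff {nu lam : ℕ → ℕ} (hlam : Antitone fun a => lam (a + 1))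
    (hnu : Antitone fun a => nu (a + 1)) {l l' : ℕ}
    (hllam : ∀ a, l ≤ a → lam a = 0) (hlnu : ∀ a, l' ≤ a → nu a = 0) (p : ℕ × ℕ) :
    p ∈ skewCells (transposeP lam) nu ↔
      1 ≤ p.1 ∧ 1 ≤ p.2 ∧ transposeP nu p.2 < p.1 ∧ p.1 ≤ lam p.2 := by
  constructor
  · rintro ⟨h1, h2, h3⟩
    have hb : 1 ≤ p.2 := by omega
    refine ⟨h1, hb, ?_, (tp_le_iff hlam hllam h1 hb).mp h3⟩
    by_contra h
    push_neg at h
    have := (tp_le_iff hnu hlnu hb h1).mp h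
    omega
  · rintro ⟨h1, h2, h3, h4⟩
    refine ⟨h1, ?_, (tp_le_iff hlam hllam h1 h2).mpr h4⟩
    by_contra h
    push_neg at h
    have := (tp_le_iff hnu hlnu h2 h1).mpr h
    omega

set_option maxHeartbeats 2000000 in
/-- Let `λ, μ` be partitions with `μ ⊆ λ` related by
`μ = s_{ε_i+ε_j} ·_δ λ` (`i < j`), i.e. `μ = λ − c(ε_i+ε_j)` with
`c = λ_i + λ_j − δ − i − j + 2 ≥ 0`.  Then `μ^T ⊆ λ^T` are maximal `δ`-balanced:
they are `δ`-balanced, and there is no partition `ν` with `μ^T ⊊ ν ⊊ λ^T` such that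
`ν` and `λ^T` are `δ`-balanced. -/
theorem stmt13 (δ : ℤ) (lam mu : ℕ → ℕ)
    (hlam : Antitone fun a => lam (a + 1)) (hlam0 : lam 0 = 0)
    (hlamsupp : ∃ l, ∀ a, l ≤ a → lam a = 0)
    (hmu : Antitone fun a => mu (a + 1)) (hmu0 : mu 0 = 0)
    (i j : ℕ) (hi : 1 ≤ i) (hij : i < j)
    (c : ℤ) (hc : c = (lam i : ℤ) + lam j - δ - i - j + 2) (hc0 : 0 ≤ c)
    (hmui : (mu i : ℤ) = (lam i : ℤ) - c)
    (hmuj : (mu j : ℤ) = (lam j : ℤ) - c)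
    (helse : ∀ a, a ≠ i → a ≠ j → mu a = lam a) :
    IsBalanced δ (transposeP lam) (transposeP mu) ∧
    ¬ ∃ nu : ℕ → ℕ, (Antitone fun a => nu (a + 1)) ∧
        (∀ a, transposeP mu a ≤ nu a) ∧ (∀ a, nu a ≤ transposeP lam a) ∧
        nu ≠ transposeP mu ∧ nu ≠ transposeP lam ∧
        IsBalanced δ (transposeP lam) nu := by
  
  obtain ⟨l0, hl0⟩ := hlamsupp
  have hj1 : 1 ≤ j := by omega
  have hLji : lam j ≤ lam i := antFrom1 hlam hi hij.le
  have hmule : ∀ a, mu a ≤ lam a := by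
    intro a
    by_cases h1 : a = i
    · subst h1; omega
    · by_cases h2 : a = j
      · subst h2; omega
      · rw [helse a h1 h2]
  have hmusupp : ∀ a, l0 ≤ a → mu a = 0 := by
    intro a ha
    have h1 := hmule a
    have h2 := hl0 a ha
    omega
  obtain ⟨cn, hcn⟩ : ∃ cn : ℕ, (cn : ℤ) = c := ⟨c.toNat, Int.toNat_of_nonneg hc0⟩
  have hMi : mu i + cn = lam i := by omega
  have hMj : mu j + cn = lam j := by omega
  have hmemS : ∀ p : ℕ × ℕ,
      p ∈ skewCells (transposeP lam) (transposeP mu) ↔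
        ((p.2 = i ∧ mu i < p.1 ∧ p.1 ≤ lam i) ∨ (p.2 = j ∧ mu j < p.1 ∧ p.1 ≤ lam j)) := by
    intro p
    rw [memS_iff hlam hmu hl0 hmusupp]
    constructor
    · rintro ⟨h1, h2, h3, h4⟩
      by_cases hbi : p.2 = i
      · exact Or.inl ⟨hbi, by rw [hbi] at h3; exact h3, by rw [hbi] at h4; exact h4⟩
      · by_cases hbj : p.2 = j
        · exact Or.inr ⟨hbj, by rw [hbj] at h3; exact h3, by rw [hbj] at h4; exact h4⟩
        · rw [helse p.2 hbi hbj] at h3; omega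
    · rintro (⟨hb, h3, h4⟩ | ⟨hb, h3, h4⟩)
      · exact ⟨by omega, by omega, by rw [hb]; omega, by rw [hb]; omega⟩
      · exact ⟨by omega, by omega, by rw [hb]; omega, by rw [hb]; omega⟩
  constructor
  · refine ⟨fun a => tp_mono hmule hl0 a, ?_, ?_⟩
    · -- the pairing
      refine ⟨fun p => (lam i + lam j + 1 - cn - p.1, i + j - p.2), ?_⟩
      intro p hp
      have hp' : (p.2 = i ∧ mu i < p.1 ∧ p.1 ≤ lam i) ∨ (p.2 = j ∧ mu j < p.1 ∧ p.1 ≤ lam j) :=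
        (hmemS p).mp hp
      rcases hp' with ⟨hb, h3, h4⟩ | ⟨hb, h3, h4⟩
      · refine ⟨(hmemS _).mpr (Or.inr ⟨show i + j - p.2 = j by omega,
          show mu j < lam i + lam j + 1 - cn - p.1 by omega,
          show lam i + lam j + 1 - cn - p.1 ≤ lam j by omega⟩), ?_, ?_, ?_⟩
        · exact Prod.ext_iff.mpr ⟨show lam i + lam j + 1 - cn - (lam i + lam j + 1 - cn - p.1) = p.1 by omega,
            show i + j - (i + j - p.2) = p.2 by omega⟩
        · intro hcon
          have h5 : i + j - p.2 = p.2 := congrArg Prod.snd hcon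
          omega
        · show ((p.2 : ℤ) - p.1) + ((↑(i + j - p.2) : ℤ) - ↑(lam i + lam j + 1 - cn - p.1)) = 1 - δ
          omega
      · refine ⟨(hmemS _).mpr (Or.inl ⟨show i + j - p.2 = i by omega,
          show mu i < lam i + lam j + 1 - cn - p.1 by omega,
          show lam i + lam j + 1 - cn - p.1 ≤ lam i by omega⟩), ?_, ?_, ?_⟩
        · exact Prod.ext_iff.mpr ⟨show lam i + lam j + 1 - cn - (lam i + lam j + 1 - cn - p.1) = p.1 by omega,
            show i + j - (i + j - p.2) = p.2 by omega⟩
        · intro hcon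
          have h5 : i + j - p.2 = p.2 := congrArg Prod.snd hcon
          omega
        · show ((p.2 : ℤ) - p.1) + ((↑(i + j - p.2) : ℤ) - ↑(lam i + lam j + 1 - cn - p.1)) = 1 - δ
          omega
    · -- condition (ii)
      rintro ⟨e, he⟩ x y n hn hset
      have h1 : ((x, y) : ℕ × ℕ) ∈ skewCells (transposeP lam) (transposeP mu) ∧
          (((y : ℤ) - x) = -δ / 2 ∨ ((y : ℤ) - x) = 1 - δ / 2) :=
        (Set.ext_iff.mp hset (x, y)).mpr ⟨0, hn, Or.inl rfl⟩
      have h2 : ((x + 1, y) : ℕ × ℕ) ∈ skewCells (transposeP lam) (transposeP mu) ∧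
          (((y : ℤ) - (x + 1 : ℕ)) = -δ / 2 ∨ ((y : ℤ) - (x + 1 : ℕ)) = 1 - δ / 2) :=
        (Set.ext_iff.mp hset (x + 1, y)).mpr ⟨0, hn, Or.inr rfl⟩
      have hctx : (y : ℤ) - x = 1 - e := by
        rcases h1.2 with h | h <;> rcases h2.2 with h' | h' <;> omega
      have hS1 : (y = i ∧ mu i < x ∧ x ≤ lam i) ∨ (y = j ∧ mu j < x ∧ x ≤ lam j) :=
        (hmemS _).mp h1.1
      rcases hS1 with ⟨hyi, hx3, hx4⟩ | ⟨hyj, hx3, hx4⟩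
      · -- y = i
        have hqS : ((lam i + lam j + 1 - cn - x, j) : ℕ × ℕ) ∈
            skewCells (transposeP lam) (transposeP mu) :=
          (hmemS _).mpr (Or.inr ⟨rfl, by omega, by omega⟩)
        have hqmid : ((lam i + lam j + 1 - cn - x, j) : ℕ × ℕ) ∈
            {c : ℕ × ℕ | c ∈ skewCells (transposeP lam) (transposeP mu) ∧
              (((c.2 : ℤ) - c.1) = -δ / 2 ∨ ((c.2 : ℤ) - c.1) = 1 - δ / 2)} :=
          ⟨hqS, Or.inl (show ((j : ℤ) - ↑(lam i + lam j + 1 - cn - x)) = -δ / 2 by omega)⟩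
        obtain ⟨k, hk, hqe⟩ : ∃ k, k < n ∧
            (((lam i + lam j + 1 - cn - x, j) : ℕ × ℕ) = (x + k, y + k) ∨
             ((lam i + lam j + 1 - cn - x, j) : ℕ × ℕ) = (x + k + 1, y + k)) :=
          (Set.ext_iff.mp hset _).mp hqmid
        have hjk : j = y + k := by
          rcases hqe with h | h
          · exact congrArg Prod.snd h
          · exact congrArg Prod.snd h
        have hn2 : 2 ≤ n := by omega
        by_cases hn3 : 3 ≤ n
        · exfalso
          have h31 := (Set.ext_iff.mp hset (x + 1, y + 1)).mpr ⟨1, by omega, Or.inl rfl⟩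
          have h32 := (Set.ext_iff.mp hset (x + 2, y + 2)).mpr ⟨2, by omega, Or.inl rfl⟩
          have h31' : (y + 1 = i ∧ mu i < x + 1 ∧ x + 1 ≤ lam i) ∨
              (y + 1 = j ∧ mu j < x + 1 ∧ x + 1 ≤ lam j) := (hmemS _).mp h31.1
          have h32' : (y + 2 = i ∧ mu i < x + 2 ∧ x + 2 ≤ lam i) ∨
              (y + 2 = j ∧ mu j < x + 2 ∧ x + 2 ≤ lam j) := (hmemS _).mp h32.1
          rcases h31' with ⟨h, _⟩ | ⟨h, _⟩ <;> rcases h32' with ⟨h', _⟩ | ⟨h', _⟩ <;> omega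
        · have hn2' : n = 2 := by omega
          exact ⟨1, by omega⟩
      · -- y = j
        have hqS : ((lam i + lam j + 1 - cn - x, i) : ℕ × ℕ) ∈
            skewCells (transposeP lam) (transposeP mu) :=
          (hmemS _).mpr (Or.inl ⟨rfl, by omega, by omega⟩)
        have hqmid : ((lam i + lam j + 1 - cn - x, i) : ℕ × ℕ) ∈
            {c : ℕ × ℕ | c ∈ skewCells (transposeP lam) (transposeP mu) ∧
              (((c.2 : ℤ) - c.1) = -δ / 2 ∨ ((c.2 : ℤ) - c.1) = 1 - δ / 2)} :=
          ⟨hqS, Or.inl (show ((i : ℤ) - ↑(lam i + lam j + 1 - cn - x)) = -δ / 2 by omega)⟩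
        obtain ⟨k, hk, hqe⟩ : ∃ k, k < n ∧
            (((lam i + lam j + 1 - cn - x, i) : ℕ × ℕ) = (x + k, y + k) ∨
             ((lam i + lam j + 1 - cn - x, i) : ℕ × ℕ) = (x + k + 1, y + k)) :=
          (Set.ext_iff.mp hset _).mp hqmid
        have hjk : i = y + k := by
          rcases hqe with h | h
          · exact congrArg Prod.snd h
          · exact congrArg Prod.snd h
        exact absurd hjk (by omega)
  · rintro ⟨nu, hnm, hn1, hn2, hne1, hne2, hnb1, ⟨g, hg⟩, hnstair⟩
    -- dispose of the case c = 0
    by_cases hc00 : c = 0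
    · apply hne2
      have hmueq : mu = lam := by
        funext a
        by_cases h1 : a = i
        · subst h1; omega
        · by_cases h2 : a = j
          · subst h2; omega
          · exact helse a h1 h2
      funext a
      have h1 := hn1 a
      rw [hmueq] at h1
      exact le_antisymm (hn2 a) h1
    have hcn1 : 1 ≤ cn := by omega
    -- support of transposeP lam, and of nu
    have hTl : ∀ y, lam 1 + 1 ≤ y → transposeP lam y = 0 := by
      intro y hy
      rw [tp_eq]
      have h : {a : ℕ | 1 ≤ a ∧ y ≤ lam a} = ∅ := by
        ext a
        simp only [Set.mem_setOf_eq, Set.mem_empty_iff_false, iff_false, not_and, not_le]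
        intro ha
        have := antFrom1 hlam (le_refl 1) ha
        omega
      rw [h, Set.ncard_empty]
    have hnusupp : ∀ y, lam 1 + 1 ≤ y → nu y = 0 := by
      intro y hy
      have h1 := hn2 y
      rw [hTl y hy] at h1
      omega
    have hmemT : ∀ p : ℕ × ℕ,
        p ∈ skewCells (transposeP lam) nu ↔
          ((p.2 = i ∧ transposeP nu i < p.1 ∧ p.1 ≤ lam i) ∨
           (p.2 = j ∧ transposeP nu j < p.1 ∧ p.1 ≤ lam j)) := by
      intro p
      rw [memT_iff hlam hnm hl0 hnusupp]
      constructor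
      · rintro ⟨h1, h2, h3, h4⟩
        have hmup : mu p.2 < p.1 := by
          by_contra h
          push_neg at h
          have h5 := (tp_le_iff hmu hmusupp h1 h2).mpr h
          have h6 := hn1 p.1
          have h7 := (tp_le_iff hnm hnusupp h2 h1).mpr (by omega)
          omega
        by_cases hbi : p.2 = i
        · exact Or.inl ⟨hbi, by rw [hbi] at h3; exact h3, by rw [hbi] at h4; exact h4⟩
        · by_cases hbj : p.2 = j
          · exact Or.inr ⟨hbj, by rw [hbj] at h3; exact h3, by rw [hbj] at h4; exact h4⟩
          · rw [helse p.2 hbi hbj] at hmup; omega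
      · rintro (⟨hb, h3, h4⟩ | ⟨hb, h3, h4⟩)
        · exact ⟨by omega, by omega, by rw [hb]; omega, by rw [hb]; omega⟩
        · exact ⟨by omega, by omega, by rw [hb]; omega, by rw [hb]; omega⟩
  
    -- bounds on transposeP nu at i, j
    have hpiL : transposeP nu i ≤ lam i := by
      by_contra h
      push_neg at h
      have h1 : i ≤ nu (lam i + 1) :=
        (tp_le_iff hnm hnusupp hi (show 1 ≤ lam i + 1 by omega)).mp (by omega)
      have h2 := hn2 (lam i + 1)
      have h3 : ¬ (i ≤ transposeP lam (lam i + 1)) := by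
        intro hcon
        have := (tp_le_iff hlam hl0 (show 1 ≤ lam i + 1 by omega) hi).mp hcon
        omega
      omega
    have hpjL : transposeP nu j ≤ lam j := by
      by_contra h
      push_neg at h
      have h1 : j ≤ nu (lam j + 1) :=
        (tp_le_iff hnm hnusupp hj1 (show 1 ≤ lam j + 1 by omega)).mp (by omega)
      have h2 := hn2 (lam j + 1)
      have h3 : ¬ (j ≤ transposeP lam (lam j + 1)) := by
        intro hcon
        have := (tp_le_iff hlam hl0 (show 1 ≤ lam j + 1 by omega) hj1).mp hcon
        omega
      omega
    have hpiM : mu i ≤ transposeP nu i := by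
      rcases Nat.eq_zero_or_pos (mu i) with h | h
      · omega
      · have h1 : i ≤ transposeP mu (mu i) := (tp_le_iff hmu hmusupp h hi).mpr le_rfl
        have h2 := hn1 (mu i)
        exact (tp_le_iff hnm hnusupp hi h).mpr (by omega)
    have hpjM : mu j ≤ transposeP nu j := by
      rcases Nat.eq_zero_or_pos (mu j) with h | h
      · omega
      · have h1 : j ≤ transposeP mu (mu j) := (tp_le_iff hmu hmusupp h hj1).mpr le_rfl
        have h2 := hn1 (mu j)
        exact (tp_le_iff hnm hnusupp hj1 h).mpr (by omega)
    -- T is nonempty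
    obtain ⟨p0, hp0⟩ : ∃ p : ℕ × ℕ, p ∈ skewCells (transposeP lam) nu := by
      by_contra h
      push_neg at h
      apply hne2
      funext a
      rcases Nat.eq_zero_or_pos a with ha | ha
      · subst ha
        have h1 := hn2 0
        rw [tp_zero]
        rw [tp_zero] at h1
        omega
      · refine le_antisymm (hn2 a) ?_
        by_contra hlt
        push_neg at hlt
        exact (h (a, nu a + 1)) ⟨ha, show nu a < nu a + 1 by omega, show nu a + 1 ≤ transposeP lam a by omega⟩
    rw [hmemT] at hp0
  
    by_cases hpil : transposeP nu i < lam i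
    · -- Case: column i of T is nonempty
      have hwmem : ((lam i, i) : ℕ × ℕ) ∈ skewCells (transposeP lam) nu :=
        (hmemT _).mpr (Or.inl ⟨rfl, hpil, le_rfl⟩)
      obtain ⟨hg1, hg2, hg3, hg4⟩ := hg _ hwmem
      rw [hmemT] at hg1
      have hg4' : ((i : ℤ) - (lam i : ℤ)) +
          (((g ((lam i, i) : ℕ × ℕ)).2 : ℤ) - ((g ((lam i, i) : ℕ × ℕ)).1 : ℤ)) = 1 - δ := hg4
      -- the partner of the bottom cell of column i is the top cell of column j,
      -- hence column j of T is full
      have hpj : transposeP nu j = mu j := by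
        rcases hg1 with ⟨hB, h3, h4⟩ | ⟨hB, h3, h4⟩
        · exfalso
          rw [hB] at hg4'
          omega
        · rw [hB] at hg4'
          omega
      -- if column i of T were full as well, then nu = transposeP mu
      by_cases hpim : transposeP nu i ≤ mu i
      · exfalso
        apply hne1
        funext a
        rcases Nat.eq_zero_or_pos a with ha | ha
        · subst ha
          have h1 := hn2 0
          rw [tp_zero]
          rw [tp_zero] at h1
          omega
        · refine le_antisymm ?_ (hn1 a)
          by_contra hlt
          push_neg at hlt
          have hSa : ((a, transposeP mu a + 1) : ℕ × ℕ) ∈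
              skewCells (transposeP lam) (transposeP mu) :=
            ⟨ha, show transposeP mu a < transposeP mu a + 1 by omega,
              show transposeP mu a + 1 ≤ transposeP lam a by
                have := hn2 a; omega⟩
          have hSa' := (hmemS _).mp hSa
          have hTa : ((a, transposeP mu a + 1) : ℕ × ℕ) ∈ skewCells (transposeP lam) nu := by
            rw [hmemT]
            rcases hSa' with ⟨hb, h3, h4⟩ | ⟨hb, h3, h4⟩
            · exact Or.inl ⟨hb, by omega, h4⟩
            · exact Or.inr ⟨hb, by omega, h4⟩
          have hTa' : 1 ≤ a ∧ nu a < transposeP mu a + 1 ∧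
              transposeP mu a + 1 ≤ transposeP lam a := hTa
          omega
      push_neg at hpim
      -- probe 2: partner of the cell just above the top of column i forces
      -- (transposeP nu i) + j - i ≤ lam j
      have hw3 : ((mu j + 1 + (lam i - transposeP nu i), j) : ℕ × ℕ) ∈
          skewCells (transposeP lam) nu :=
        (hmemT _).mpr (Or.inr ⟨rfl,
          show transposeP nu j < mu j + 1 + (lam i - transposeP nu i) by omega,
          show mu j + 1 + (lam i - transposeP nu i) ≤ lam j by omega⟩)
      obtain ⟨hq1, _, _, hq4⟩ := hg _ hw3
      rw [hmemT] at hq1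
      have hq4' : ((j : ℤ) - ((mu j + 1 + (lam i - transposeP nu i) : ℕ) : ℤ)) +
          (((g ((mu j + 1 + (lam i - transposeP nu i), j) : ℕ × ℕ)).2 : ℤ) -
           ((g ((mu j + 1 + (lam i - transposeP nu i), j) : ℕ × ℕ)).1 : ℤ)) = 1 - δ := hq4
      have hpirel : (transposeP nu i : ℤ) + j - i ≤ lam j := by
        rcases hq1 with ⟨hB, h3, h4⟩ | ⟨hB, h3, h4⟩
        · exfalso; rw [hB] at hq4'; omega
        · rw [hB] at hq4'; omega
      -- probe 1: two cells of content j - lam j would have the same partner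
      have hpirel2 : (lam j : ℤ) + i - j ≤ transposeP nu i := by
        by_contra hcon
        push_neg at hcon
        have hw1 : ((lam j, j) : ℕ × ℕ) ∈ skewCells (transposeP lam) nu :=
          (hmemT _).mpr (Or.inr ⟨rfl, show transposeP nu j < lam j by omega, le_rfl⟩)
        have hw2 : ((i + lam j - j, i) : ℕ × ℕ) ∈ skewCells (transposeP lam) nu :=
          (hmemT _).mpr (Or.inl ⟨rfl, show transposeP nu i < i + lam j - j by omega,
            show i + lam j - j ≤ lam i by omega⟩)
        obtain ⟨ha1, hb1, _, hd1⟩ := hg _ hw1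
        obtain ⟨ha2, hb2, _, hd2⟩ := hg _ hw2
        rw [hmemT] at ha1 ha2
        have hd1' : ((j : ℤ) - ((lam j : ℕ) : ℤ)) + (((g ((lam j, j) : ℕ × ℕ)).2 : ℤ) -
            ((g ((lam j, j) : ℕ × ℕ)).1 : ℤ)) = 1 - δ := hd1
        have hd2' : ((i : ℤ) - ((i + lam j - j : ℕ) : ℤ)) +
            (((g ((i + lam j - j, i) : ℕ × ℕ)).2 : ℤ) -
             ((g ((i + lam j - j, i) : ℕ × ℕ)).1 : ℤ)) = 1 - δ := hd2
        have he1 : (g ((lam j, j) : ℕ × ℕ)).2 = j ∧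
            ((g ((lam j, j) : ℕ × ℕ)).1 : ℤ) = (j : ℤ) - i + mu i + 1 := by
          rcases ha1 with ⟨hB, h3, h4⟩ | ⟨hB, h3, h4⟩
          · exfalso; rw [hB] at hd1'; omega
          · rw [hB] at hd1'; exact ⟨hB, by omega⟩
        have he2 : (g ((i + lam j - j, i) : ℕ × ℕ)).2 = j ∧
            ((g ((i + lam j - j, i) : ℕ × ℕ)).1 : ℤ) = (j : ℤ) - i + mu i + 1 := by
          rcases ha2 with ⟨hB, h3, h4⟩ | ⟨hB, h3, h4⟩
          · exfalso; rw [hB] at hd2'; omega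
          · rw [hB] at hd2'; exact ⟨hB, by omega⟩
        have hgeq : g ((lam j, j) : ℕ × ℕ) = g ((i + lam j - j, i) : ℕ × ℕ) := by
          obtain ⟨he11, he12⟩ := he1
          obtain ⟨he21, he22⟩ := he2
          exact Prod.ext_iff.mpr ⟨by omega, by omega⟩
        have hweq : ((lam j, j) : ℕ × ℕ) = ((i + lam j - j, i) : ℕ × ℕ) := by
          rw [← hb1, hgeq, hb2]
        have hji' : j = i := congrArg Prod.snd hweq
        omega
      have hpieq2 : (transposeP nu i : ℤ) = (lam j : ℤ) + i - j := by omega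
      -- endgames
      rcases Int.even_or_odd δ with hev | hod
      · -- δ even : use the staircase condition of nu
        obtain ⟨e, he⟩ := hev
        by_cases hm : (i : ℤ) - transposeP nu i ≤ -e
        · -- both middle cells in column j
          obtain ⟨x, hxz⟩ : ∃ x : ℕ, (x : ℤ) = (j : ℤ) + e - 1 :=
            ⟨((j : ℤ) + e - 1).toNat, Int.toNat_of_nonneg (by omega)⟩
          have heq : {q : ℕ × ℕ | q ∈ skewCells (transposeP lam) nu ∧
              (((q.2 : ℤ) - q.1) = -δ / 2 ∨ ((q.2 : ℤ) - q.1) = 1 - δ / 2)} =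
              {q : ℕ × ℕ | ∃ k < 1, q = (x + k, j + k) ∨ q = (x + k + 1, j + k)} := by
            ext q
            simp only [Set.mem_setOf_eq]
            constructor
            · rintro ⟨hqT, hqc⟩
              rw [hmemT] at hqT
              refine ⟨0, one_pos, ?_⟩
              rcases hqT with ⟨hB, h3, h4⟩ | ⟨hB, h3, h4⟩
              · exfalso
                rcases hqc with h | h <;> (rw [hB] at h; omega)
              · rcases hqc with h | h
                · right
                  rw [hB] at h
                  exact Prod.ext_iff.mpr ⟨show q.1 = x + 0 + 1 by omega, show q.2 = j + 0 by omega⟩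
                · left
                  rw [hB] at h
                  exact Prod.ext_iff.mpr ⟨show q.1 = x + 0 by omega, show q.2 = j + 0 by omega⟩
            · rintro ⟨k, hk, hq | hq⟩
              · have hk0 : k = 0 := by omega
                subst hk0
                subst hq
                exact ⟨(hmemT _).mpr (Or.inr ⟨rfl, show transposeP nu j < x + 0 by omega,
                  show x + 0 ≤ lam j by omega⟩),
                  Or.inr (show ((j + 0 : ℕ) : ℤ) - ((x + 0 : ℕ) : ℤ) = 1 - δ / 2 by omega)⟩
              · have hk0 : k = 0 := by omega
                subst hk0
                subst hq
                exact ⟨(hmemT _).mpr (Or.inr ⟨rfl, show transposeP nu j < x + 0 + 1 by omega,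
                  show x + 0 + 1 ≤ lam j by omega⟩),
                  Or.inl (show ((j + 0 : ℕ) : ℤ) - ((x + 0 + 1 : ℕ) : ℤ) = -δ / 2 by omega)⟩
          exact (by decide : ¬ Even 1) (hnstair ⟨e, he⟩ x j 1 one_pos heq)
        · by_cases hm' : 1 - e ≤ (i : ℤ) - transposeP nu i - 1
          · -- both middle cells in column i
            obtain ⟨x, hxz⟩ : ∃ x : ℕ, (x : ℤ) = (i : ℤ) + e - 1 :=
              ⟨((i : ℤ) + e - 1).toNat, Int.toNat_of_nonneg (by omega)⟩
            have heq : {q : ℕ × ℕ | q ∈ skewCells (transposeP lam) nu ∧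
                (((q.2 : ℤ) - q.1) = -δ / 2 ∨ ((q.2 : ℤ) - q.1) = 1 - δ / 2)} =
                {q : ℕ × ℕ | ∃ k < 1, q = (x + k, i + k) ∨ q = (x + k + 1, i + k)} := by
              ext q
              simp only [Set.mem_setOf_eq]
              constructor
              · rintro ⟨hqT, hqc⟩
                rw [hmemT] at hqT
                refine ⟨0, one_pos, ?_⟩
                rcases hqT with ⟨hB, h3, h4⟩ | ⟨hB, h3, h4⟩
                · rcases hqc with h | h
                  · right
                    rw [hB] at h
                    exact Prod.ext_iff.mpr ⟨show q.1 = x + 0 + 1 by omega, show q.2 = i + 0 by omega⟩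
                  · left
                    rw [hB] at h
                    exact Prod.ext_iff.mpr ⟨show q.1 = x + 0 by omega, show q.2 = i + 0 by omega⟩
                · exfalso
                  rcases hqc with h | h <;> (rw [hB] at h; omega)
              · rintro ⟨k, hk, hq | hq⟩
                · have hk0 : k = 0 := by omega
                  subst hk0
                  subst hq
                  exact ⟨(hmemT _).mpr (Or.inl ⟨rfl, show transposeP nu i < x + 0 by omega,
                    show x + 0 ≤ lam i by omega⟩),
                    Or.inr (show ((i + 0 : ℕ) : ℤ) - ((x + 0 : ℕ) : ℤ) = 1 - δ / 2 by omega)⟩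
                · have hk0 : k = 0 := by omega
                  subst hk0
                  subst hq
                  exact ⟨(hmemT _).mpr (Or.inl ⟨rfl, show transposeP nu i < x + 0 + 1 by omega,
                    show x + 0 + 1 ≤ lam i by omega⟩),
                    Or.inl (show ((i + 0 : ℕ) : ℤ) - ((x + 0 + 1 : ℕ) : ℤ) = -δ / 2 by omega)⟩
            exact (by decide : ¬ Even 1) (hnstair ⟨e, he⟩ x i 1 one_pos heq)
          · -- middle straddles the boundary : impossible
            exfalso
            omega
      · -- δ odd : the middle cell would be a fixed point of g
        obtain ⟨e, he⟩ := hod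
        by_cases htc : (i : ℤ) - transposeP nu i ≤ -e
        · obtain ⟨a, haz⟩ : ∃ a : ℕ, (a : ℤ) = (j : ℤ) + e :=
            ⟨((j : ℤ) + e).toNat, Int.toNat_of_nonneg (by omega)⟩
          have hu : ((a, j) : ℕ × ℕ) ∈ skewCells (transposeP lam) nu :=
            (hmemT _).mpr (Or.inr ⟨rfl, show transposeP nu j < a by omega,
              show a ≤ lam j by omega⟩)
          obtain ⟨hu1, _, hu3, hu4⟩ := hg _ hu
          rw [hmemT] at hu1
          have hu4' : ((j : ℤ) - ((a : ℕ) : ℤ)) + (((g ((a, j) : ℕ × ℕ)).2 : ℤ) -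
              ((g ((a, j) : ℕ × ℕ)).1 : ℤ)) = 1 - δ := hu4
          apply hu3
          rcases hu1 with ⟨hB, h3, h4⟩ | ⟨hB, h3, h4⟩
          · exfalso; rw [hB] at hu4'; omega
          · rw [hB] at hu4'
            exact Prod.ext_iff.mpr ⟨show (g ((a, j) : ℕ × ℕ)).1 = a by omega, hB⟩
        · obtain ⟨a, haz⟩ : ∃ a : ℕ, (a : ℤ) = (i : ℤ) + e :=
            ⟨((i : ℤ) + e).toNat, Int.toNat_of_nonneg (by omega)⟩
          have hu : ((a, i) : ℕ × ℕ) ∈ skewCells (transposeP lam) nu :=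
            (hmemT _).mpr (Or.inl ⟨rfl, show transposeP nu i < a by omega,
              show a ≤ lam i by omega⟩)
          obtain ⟨hu1, _, hu3, hu4⟩ := hg _ hu
          rw [hmemT] at hu1
          have hu4' : ((i : ℤ) - ((a : ℕ) : ℤ)) + (((g ((a, i) : ℕ × ℕ)).2 : ℤ) -
              ((g ((a, i) : ℕ × ℕ)).1 : ℤ)) = 1 - δ := hu4
          apply hu3
          rcases hu1 with ⟨hB, h3, h4⟩ | ⟨hB, h3, h4⟩
          · rw [hB] at hu4'
            exact Prod.ext_iff.mpr ⟨show (g ((a, i) : ℕ × ℕ)).1 = a by omega, hB⟩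
          · exfalso; rw [hB] at hu4'; omega
    · -- Case: column i of T is empty
      have hpie : transposeP nu i = lam i := by omega
      have hpjl : transposeP nu j < lam j := by
        rcases hp0 with ⟨hB, h3, h4⟩ | ⟨hB, h3, h4⟩ <;> omega
      have hbot : ((lam j, j) : ℕ × ℕ) ∈ skewCells (transposeP lam) nu :=
        (hmemT _).mpr (Or.inr ⟨rfl, hpjl, le_rfl⟩)
      have htop : ((transposeP nu j + 1, j) : ℕ × ℕ) ∈ skewCells (transposeP lam) nu :=
        (hmemT _).mpr (Or.inr ⟨rfl, show transposeP nu j < transposeP nu j + 1 by omega,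
          show transposeP nu j + 1 ≤ lam j by omega⟩)
      obtain ⟨hb1, _, _, hd1⟩ := hg _ hbot
      obtain ⟨hb2, _, _, hd2⟩ := hg _ htop
      rw [hmemT] at hb1 hb2
      have hd1' : ((j : ℤ) - ((lam j : ℕ) : ℤ)) + (((g ((lam j, j) : ℕ × ℕ)).2 : ℤ) -
          ((g ((lam j, j) : ℕ × ℕ)).1 : ℤ)) = 1 - δ := hd1
      have hd2' : ((j : ℤ) - ((transposeP nu j + 1 : ℕ) : ℤ)) +
          (((g ((transposeP nu j + 1, j) : ℕ × ℕ)).2 : ℤ) -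
           ((g ((transposeP nu j + 1, j) : ℕ × ℕ)).1 : ℤ)) = 1 - δ := hd2
      have hpjv : (transposeP nu j : ℤ) = (j : ℤ) - i + mu i := by
        rcases hb1 with ⟨hB, h3, h4⟩ | ⟨hB, h3, h4⟩
        · exfalso; omega
        rcases hb2 with ⟨hB', h3', h4'⟩ | ⟨hB', h3', h4'⟩
        · exfalso; omega
        rw [hB] at hd1'
        rw [hB'] at hd2'
        omega
      rcases Int.even_or_odd δ with hev | hod
      · obtain ⟨e, he⟩ := hev
        obtain ⟨x, hxz⟩ : ∃ x : ℕ, (x : ℤ) = (j : ℤ) + e - 1 :=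
          ⟨((j : ℤ) + e - 1).toNat, Int.toNat_of_nonneg (by omega)⟩
        have heq : {q : ℕ × ℕ | q ∈ skewCells (transposeP lam) nu ∧
            (((q.2 : ℤ) - q.1) = -δ / 2 ∨ ((q.2 : ℤ) - q.1) = 1 - δ / 2)} =
            {q : ℕ × ℕ | ∃ k < 1, q = (x + k, j + k) ∨ q = (x + k + 1, j + k)} := by
          ext q
          simp only [Set.mem_setOf_eq]
          constructor
          · rintro ⟨hqT, hqc⟩
            rw [hmemT] at hqT
            refine ⟨0, one_pos, ?_⟩
            rcases hqT with ⟨hB, h3, h4⟩ | ⟨hB, h3, h4⟩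
            · exfalso; omega
            · rcases hqc with h | h
              · right
                rw [hB] at h
                exact Prod.ext_iff.mpr ⟨show q.1 = x + 0 + 1 by omega, show q.2 = j + 0 by omega⟩
              · left
                rw [hB] at h
                exact Prod.ext_iff.mpr ⟨show q.1 = x + 0 by omega, show q.2 = j + 0 by omega⟩
          · rintro ⟨k, hk, hq | hq⟩
            · have hk0 : k = 0 := by omega
              subst hk0
              subst hq
              exact ⟨(hmemT _).mpr (Or.inr ⟨rfl, show transposeP nu j < x + 0 by omega,
                show x + 0 ≤ lam j by omega⟩),
                Or.inr (show ((j + 0 : ℕ) : ℤ) - ((x + 0 : ℕ) : ℤ) = 1 - δ / 2 by omega)⟩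
            · have hk0 : k = 0 := by omega
              subst hk0
              subst hq
              exact ⟨(hmemT _).mpr (Or.inr ⟨rfl, show transposeP nu j < x + 0 + 1 by omega,
                show x + 0 + 1 ≤ lam j by omega⟩),
                Or.inl (show ((j + 0 : ℕ) : ℤ) - ((x + 0 + 1 : ℕ) : ℤ) = -δ / 2 by omega)⟩
        exact (by decide : ¬ Even 1) (hnstair ⟨e, he⟩ x j 1 one_pos heq)
      · obtain ⟨e, he⟩ := hod
        obtain ⟨a, haz⟩ : ∃ a : ℕ, (a : ℤ) = (j : ℤ) + e :=
          ⟨((j : ℤ) + e).toNat, Int.toNat_of_nonneg (by omega)⟩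
        have hu : ((a, j) : ℕ × ℕ) ∈ skewCells (transposeP lam) nu :=
          (hmemT _).mpr (Or.inr ⟨rfl, show transposeP nu j < a by omega,
            show a ≤ lam j by omega⟩)
        obtain ⟨hu1, _, hu3, hu4⟩ := hg _ hu
        rw [hmemT] at hu1
        have hu4' : ((j : ℤ) - ((a : ℕ) : ℤ)) + (((g ((a, j) : ℕ × ℕ)).2 : ℤ) -
            ((g ((a, j) : ℕ × ℕ)).1 : ℤ)) = 1 - δ := hu4
        apply hu3
        rcases hu1 with ⟨hB, h3, h4⟩ | ⟨hB, h3, h4⟩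
        · exfalso; omega
        · rw [hB] at hu4'
          exact Prod.ext_iff.mpr ⟨show (g ((a, j) : ℕ × ℕ)).1 = a by omega, hB⟩
end

section
/- Let p be prime and λ, μ partitions related by μ = s_{ε_i−ε_j, rp} ·_δ λ with μ ⊴ λ, μ ≠ λ, r ≠ 0, and suppose λ^T is p-regular. Then the number of nodes moved, d = λ_i − λ_j − i + j − rp, satisfies 0 < d < p, and λ_i − λ_j + j − i − d = rp is divisible by p, so the pair (λ, μ) satisfies the hypotheses of the Carter–Payne theorem with e = 1. -/
/-- A partition is `p`-regular if no (nonzero) part is repeated `p` or more times. -/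
def IsPRegular (p : ℕ) (nu : ℕ → ℕ) : Prop :=
  ¬ ∃ t, 1 ≤ t ∧ 0 < nu t ∧ nu (t + p - 1) = nu t

/-- Let `p` be prime and `λ, μ` partitions (1-indexed) related by
`μ = s_{ε_i−ε_j, rp} ·_δ λ`, i.e. `μ = λ − d(ε_i − ε_j)` with
`d = λ_i − λ_j − i + j − rp`, with `μ ⊴ λ`, `μ ≠ λ`, `r ≠ 0`, and suppose `λ^T` is
`p`-regular.  Then `0 < d < p` and `λ_i − λ_j + j − i − d = rp` is divisible by `p`,
so `(λ, μ)` satisfies the hypotheses of the Carter–Payne theorem with `e = 1`. -/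
theorem stmt17 (p : ℕ) (hp : p.Prime) (r : ℤ) (hr : r ≠ 0)
    (lam mu : ℕ → ℕ)
    (hlam : Antitone fun a => lam (a + 1)) (hlam0 : lam 0 = 0)
    (hlamsupp : ∃ l, ∀ a, l ≤ a → lam a = 0)
    (hmupart : Antitone fun a => mu (a + 1)) (hmu0 : mu 0 = 0)
    (i j : ℕ) (hi : 1 ≤ i) (hij : i < j)
    (d : ℤ) (hd : d = (lam i : ℤ) - lam j - i + j - r * p)
    (hmu : ∀ a, (mu a : ℤ) =
      (lam a : ℤ) - (if a = i then d else if a = j then -d else 0))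
    (hdom : ∀ N, (∑ a ∈ Finset.Icc 1 N, mu a) ≤ ∑ a ∈ Finset.Icc 1 N, lam a)
    (hne : mu ≠ lam)
    (hreg : IsPRegular p (transposeP lam)) :
    0 < d ∧ d < p ∧ ((lam i : ℤ) - lam j + j - i - d) = r * p := by
  -- antitonicity on rows ≥ 1
  have hlam' : ∀ a b : ℕ, 1 ≤ a → a ≤ b → lam b ≤ lam a := by
    intro a b ha hab
    have h := hlam (show a - 1 ≤ b - 1 by omega)
    simpa [show a - 1 + 1 = a by omega, show b - 1 + 1 = b by omega] using h
  have hmu' : ∀ a b : ℕ, 1 ≤ a → a ≤ b → mu b ≤ mu a := by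
    intro a b ha hab
    have h := hmupart (show a - 1 ≤ b - 1 by omega)
    simpa [show a - 1 + 1 = a by omega, show b - 1 + 1 = b by omega] using h
  -- d ≠ 0
  have hdne : d ≠ 0 := by
    intro h0
    apply hne
    funext a
    have h := hmu a
    rw [h0] at h
    simp only [neg_zero, if_pos, if_neg, ite_self, sub_zero] at h
    exact_mod_cast h
  -- d ≥ 0, using dominance at N = i
  have hdnn : 0 ≤ d := by
    have hsum : ∑ a ∈ Finset.Icc 1 i, (mu a : ℤ)
        = (∑ a ∈ Finset.Icc 1 i, (lam a : ℤ)) - d := by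
      have : ∑ a ∈ Finset.Icc 1 i, (mu a : ℤ)
          = ∑ a ∈ Finset.Icc 1 i,
              ((lam a : ℤ) - (if a = i then d else 0)) := by
        apply Finset.sum_congr rfl
        intro a ha
        rw [hmu a]
        have haj : a ≠ j := by
          have := (Finset.mem_Icc.mp ha).2; omega
        simp [haj]
      rw [this, Finset.sum_sub_distrib, Finset.sum_ite_eq'
        (Finset.Icc 1 i) i (fun _ => d)]
      simp [Finset.mem_Icc, hi]
    have hN := hdom i
    have hNZ : (∑ a ∈ Finset.Icc 1 i, (mu a : ℤ))
        ≤ ∑ a ∈ Finset.Icc 1 i, (lam a : ℤ) := by exact_mod_cast hN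
    linarith [hsum ▸ hNZ]
  have hdpos : 0 < d := lt_of_le_of_ne hdnn (Ne.symm hdne)
  -- values of mu at i and j
  have hmui : (mu i : ℤ) = (lam i : ℤ) - d := by simpa using hmu i
  have hmuj : (mu j : ℤ) = (lam j : ℤ) + d := by
    have h := hmu j
    have : j ≠ i := by omega
    simp [this] at h
    linarith
  -- step bound: d ≤ lam i - lam (i+1)
  have hstep : d ≤ (lam i : ℤ) - lam (i + 1) := by
    by_cases hji : j = i + 1
    · subst hji
      have h := hmu' i (i + 1) hi (by omega)
      have h' : (mu (i+1) : ℤ) ≤ (mu i : ℤ) := by exact_mod_cast h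
      rw [hmui, hmuj] at h'
      linarith
    · have hij1 : i + 1 < j := by omega
      have hval : (mu (i+1) : ℤ) = (lam (i+1) : ℤ) := by
        have h := hmu (i+1)
        have h1 : i + 1 ≠ i := by omega
        have h2 : i + 1 ≠ j := by omega
        simpa [h1, h2] using h
      have h := hmu' i (i + 1) hi (by omega)
      have h' : (mu (i+1) : ℤ) ≤ (mu i : ℤ) := by exact_mod_cast h
      rw [hmui, hval] at h'
      linarith
  -- the step is < p by p-regularity of the transpose
  have hsteplt : lam i < lam (i + 1) + p := by
    by_contra hcon
    push_neg at hcon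
    have hcol : ∀ y : ℕ, lam (i+1) + 1 ≤ y → y ≤ lam i → transposeP lam y = i := by
      intro y hy1 hy2
      have hseteq : {a : ℕ | 1 ≤ a ∧ y ≤ lam a} = Set.Icc 1 i := by
        ext a
        simp only [Set.mem_setOf_eq, Set.mem_Icc]
        constructor
        · rintro ⟨ha, hya⟩
          refine ⟨ha, ?_⟩
          by_contra hai
          push_neg at hai
          have := hlam' (i+1) a (by omega) (by omega)
          omega
        · rintro ⟨ha, hai⟩
          exact ⟨ha, le_trans hy2 (hlam' a i ha hai)⟩
      show Nat.card {a : ℕ // 1 ≤ a ∧ y ≤ lam a} = i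
      have h1 := Nat.card_congr (Equiv.setCongr hseteq)
      have h2 : Nat.card (Set.Icc 1 i : Set ℕ) = i := by
        rw [← Finset.coe_Icc, Nat.card_coe_set_eq, Set.ncard_coe_finset,
          Nat.card_Icc]
        omega
      exact h1.trans h2
    apply hreg
    refine ⟨lam (i+1) + 1, by omega, ?_, ?_⟩
    · rw [hcol (lam (i+1) + 1) le_rfl (by have := hp.two_le; omega)]
      omega
    · have hp2 := hp.two_le
      rw [hcol (lam (i+1) + 1) le_rfl (by omega),
        show lam (i+1) + 1 + p - 1 = lam (i+1) + p by omega,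
        hcol (lam (i+1) + p) (by omega) (by omega)]
  have hdp : d < p := by
    have : (lam i : ℤ) < (lam (i+1) : ℤ) + p := by exact_mod_cast hsteplt
    linarith
  exact ⟨hdpos, hdp, by linarith [hd]⟩
end
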